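/- Let p ≥ 3. There exists a constant C > 0 such that for all t ≥ 0 and all β ∈ ℝ: (1 + t² + 2t·cos β)^{p/2} ≤ 1 + t^p + p·t·cos β + C·(t² + t^{p−1}). -/

import Mathlib

lemma cube_le {u : ℝ} (h3 : u ≤ 3) : u ^ 3 ≤ 3 * u ^ 2 := by
  nlinarith [mul_nonneg (sq_nonneg u) (sub_nonneg.2 h3)]

lemma natpow_taylor (n : ℕ) : ∀ u : ℝ, -1 ≤ u → u ≤ 3 →
    (1 + u) ^ n ≤ 1 + n * u + ((n : ℝ) * 4 ^ n) * u ^ 2 := by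
  induction n with
  | zero => intro u h1 h3; norm_num
  | succ n ih =>
    intro u h1 h3
    have hu0 : (0:ℝ) ≤ 1 + u := by linarith
    have h2 : (1 + u) ^ n * (1 + u) ≤ (1 + n * u + ((n:ℝ) * 4 ^ n) * u ^ 2) * (1 + u) :=
      mul_le_mul_of_nonneg_right (ih u h1 h3) hu0
    have hb : (1 + u) ^ (n+1) = (1 + u) ^ n * (1 + u) := by ring
    rw [hb]
    refine h2.trans ?_
    have hE : (0:ℝ) ≤ (n:ℝ) * 4 ^ n := by positivity
    have h45 : ((4:ℝ)) ^ (n+1) = 4 * 4 ^ n := by rw [pow_succ]; ring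
    have h5 : (n:ℝ) ≤ 4 ^ n := by
      exact_mod_cast (Nat.lt_pow_self (by norm_num : 1 < 4) : n < 4 ^ n).le
    push_cast
    nlinarith [mul_le_mul_of_nonneg_left (cube_le h3) hE,
      mul_nonneg (sub_nonneg.2 h5) (sq_nonneg u),
      mul_nonneg (pow_nonneg (by norm_num : (0:ℝ) ≤ 4) n) (sq_nonneg u), sq_nonneg u]

lemma rpow_taylor {q : ℝ} (hq : 1 ≤ q) : ∃ D > (0:ℝ), ∀ a : ℝ, 0 ≤ a → a ≤ 4 →
    a ^ q ≤ 1 + q * (a - 1) + D * (a - 1) ^ 2 := by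
  set n : ℕ := ⌊q⌋₊ with hn
  have hq0 : (0:ℝ) ≤ q := by linarith
  have hnq : (n:ℝ) ≤ q := Nat.floor_le hq0
  have hqn : q < n + 1 := Nat.lt_floor_add_one q
  set r : ℝ := q - n with hr
  have hr0 : 0 ≤ r := by simp only [hr]; linarith
  have hr1 : r ≤ 1 := by simp only [hr]; linarith
  refine ⟨(n:ℝ) * 4 ^ n * 4 + n + 1, by positivity, ?_⟩
  intro a ha0 ha4
  set u : ℝ := a - 1 with hu
  have hu1 : -1 ≤ u := by simp only [hu]; linarith
  have hu3 : u ≤ 3 := by simp only [hu]; linarith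
  have hsplit : a ^ q = a ^ (n:ℝ) * a ^ r := by
    rw [← Real.rpow_add' ha0 (by simp only [hr]; intro h; linarith)]
    congr 1
    simp [hr]
  have h1 : a ^ (n:ℝ) = a ^ n := Real.rpow_natCast a n
  have hau : a = 1 + u := by simp [hu]
  have h2 : a ^ n ≤ 1 + n * u + ((n:ℝ) * 4 ^ n) * u ^ 2 := by
    rw [hau]; exact natpow_taylor n u hu1 hu3
  have h3 : a ^ r ≤ 1 + r * u := by
    rw [hau]
    exact rpow_one_add_le_one_add_mul_self hu1 hr0 hr1
  have h4 : (0:ℝ) ≤ a ^ r := Real.rpow_nonneg ha0 r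
  have h5 : (0:ℝ) ≤ a ^ n := pow_nonneg ha0 n
  have h6 : a ^ q ≤ (1 + n * u + ((n:ℝ) * 4 ^ n) * u ^ 2) * (1 + r * u) := by
    rw [hsplit, h1]
    exact mul_le_mul h2 h3 h4 (h5.trans h2)
  refine h6.trans ?_
  have hqnr : q = n + r := by simp [hr]
  have hE0 : (0:ℝ) ≤ (n:ℝ) * 4 ^ n := by positivity
  have hrc : r * u ^ 3 ≤ 3 * u ^ 2 := by
    rcases le_total 0 (u ^ 3) with hup | hup
    · calc r * u ^ 3 ≤ 1 * u ^ 3 := mul_le_mul_of_nonneg_right hr1 hup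
      _ = u ^ 3 := by ring
      _ ≤ 3 * u ^ 2 := cube_le hu3
    · calc r * u ^ 3 ≤ 0 := mul_nonpos_of_nonneg_of_nonpos hr0 hup
      _ ≤ 3 * u ^ 2 := by positivity
  have hn0 : (0:ℝ) ≤ (n:ℝ) := Nat.cast_nonneg n
  rw [hqnr]
  nlinarith [mul_le_mul_of_nonneg_left hrc hE0,
    mul_nonneg (mul_nonneg hn0 (sub_nonneg.2 hr1)) (sq_nonneg u), sq_nonneg u]

lemma small_t (p : ℝ) (hp : 3 ≤ p) : ∃ C > (0:ℝ), ∀ t : ℝ, 0 ≤ t → t ≤ 1 → ∀ s : ℝ, -1 ≤ s → s ≤ 1 →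
    (1 + t ^ 2 + 2 * t * s) ^ (p / 2) ≤ 1 + t ^ p + p * t * s + C * t ^ 2 := by
  obtain ⟨D, hD, hDle⟩ := rpow_taylor (q := p / 2) (by linarith)
  refine ⟨p / 2 + 9 * D + 1, by positivity, ?_⟩
  intro t ht0 ht1 s hs1 hs2
  set a : ℝ := 1 + t ^ 2 + 2 * t * s with ha
  have ha0 : 0 ≤ a := by nlinarith [sq_nonneg (t + s), sq_nonneg s]
  have ha4 : a ≤ 4 := by nlinarith
  have key := hDle a ha0 ha4
  have hau : a - 1 = t * (t + 2 * s) := by simp only [ha]; ring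
  have h9 : (t * (t + 2 * s)) ^ 2 ≤ 9 * t ^ 2 := by
    have : (t + 2 * s) ^ 2 ≤ 9 := by nlinarith
    nlinarith [sq_nonneg t]
  have htp : 0 ≤ t ^ p := Real.rpow_nonneg ht0 p
  rw [hau] at key
  refine key.trans ?_
  nlinarith [mul_le_mul_of_nonneg_left h9 hD.le, sq_nonneg t]

theorem stmt_12 (p : ℝ) (hp : 3 ≤ p) :
    ∃ C > (0 : ℝ), ∀ t : ℝ, 0 ≤ t → ∀ β : ℝ,
      (1 + t ^ 2 + 2 * t * Real.cos β) ^ (p / 2)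
        ≤ 1 + t ^ p + p * t * Real.cos β + C * (t ^ 2 + t ^ (p - 1)) := by
  obtain ⟨Cs, hCs, hsmall⟩ := small_t p hp
  refine ⟨Cs + p, by linarith, ?_⟩
  intro t ht0 β
  set s : ℝ := Real.cos β with hsdef
  have hs1 : -1 ≤ s := Real.neg_one_le_cos β
  have hs2 : s ≤ 1 := Real.cos_le_one β
  rcases le_or_gt t 1 with ht1 | ht1
  · have h := hsmall t ht0 ht1 s hs1 hs2
    have h1 : 0 ≤ t ^ (p - 1) := Real.rpow_nonneg ht0 _
    nlinarith [sq_nonneg t]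
  · -- t > 1 : substitute t' = 1/t
    have ht0' : (0:ℝ) < t := by linarith
    have htne : t ≠ 0 := ht0'.ne'
    set t' : ℝ := t⁻¹ with ht'
    have ht'0 : 0 ≤ t' := by positivity
    have ht'1 : t' ≤ 1 := by
      rw [ht', inv_le_one_iff₀]; right; linarith
    have hfac : 1 + t ^ 2 + 2 * t * s = t ^ 2 * (1 + t' ^ 2 + 2 * t' * s) := by
      field_simp [ht']
      have htt : t * t⁻¹ = 1 := mul_inv_cancel₀ htne
      linear_combination (-(1 + t * t⁻¹ + 2 * t * s)) * htt
    have hinner0 : 0 ≤ 1 + t' ^ 2 + 2 * t' * s := by nlinarith [sq_nonneg (t' + s), sq_nonneg s]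
    have hmul : (1 + t ^ 2 + 2 * t * s) ^ (p / 2)
        = t ^ p * (1 + t' ^ 2 + 2 * t' * s) ^ (p / 2) := by
      rw [hfac, Real.mul_rpow (by positivity) hinner0]
      congr 1
      rw [← Real.rpow_natCast t 2, ← Real.rpow_mul ht0,
        show ((2:ℕ):ℝ) * (p / 2) = p by push_cast; ring]
    have hinner := hsmall t' ht'0 ht'1 s hs1 hs2
    have htp0 : (0:ℝ) ≤ t ^ p := Real.rpow_nonneg ht0 p
    have hstep : (1 + t ^ 2 + 2 * t * s) ^ (p / 2)
        ≤ t ^ p * (1 + t' ^ p + p * t' * s + Cs * t' ^ 2) := by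
      rw [hmul]
      exact mul_le_mul_of_nonneg_left hinner htp0
    have e1 : t ^ p * t' ^ p = 1 := by
      rw [ht', ← Real.mul_rpow ht0 (by positivity), mul_inv_cancel₀ htne, Real.one_rpow]
    have e2 : t ^ p * t' = t ^ (p - 1) := by
      rw [ht', Real.rpow_sub ht0', Real.rpow_one, div_eq_mul_inv]
    have e3 : t ^ p * t' ^ 2 = t ^ (p - 2) := by
      rw [ht', Real.rpow_sub ht0',
        show ((2:ℝ)) = ((2:ℕ):ℝ) by norm_num, Real.rpow_natCast,
        div_eq_mul_inv, inv_pow]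
    have hexp : t ^ p * (1 + t' ^ p + p * t' * s + Cs * t' ^ 2)
        = t ^ p + 1 + p * t ^ (p - 1) * s + Cs * t ^ (p - 2) := by
      have h : t ^ p * (1 + t' ^ p + p * t' * s + Cs * t' ^ 2)
          = t ^ p + t ^ p * t' ^ p + p * (t ^ p * t') * s + Cs * (t ^ p * t' ^ 2) := by ring
      rw [h, e1, e2, e3]
    rw [hexp] at hstep
    refine hstep.trans ?_
    have f1 : t ^ (p - 2) ≤ t ^ (p - 1) := Real.rpow_le_rpow_of_exponent_le ht1.le (by linarith)
    have f2 : t ≤ t ^ (p - 1) := by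
      calc t = t ^ (1:ℝ) := (Real.rpow_one t).symm
      _ ≤ t ^ (p - 1) := Real.rpow_le_rpow_of_exponent_le ht1.le (by linarith)
    have f3 : 0 ≤ t ^ (p - 1) := Real.rpow_nonneg ht0 _
    nlinarith [sq_nonneg t, mul_nonneg (sub_nonneg.2 hs2) (sub_nonneg.2 f2)]
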